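/- The group HΓ₀(2) = {[[A,B],[C,D]] ∈ GL₄(ℤ[ω]) : g*Jg = J, C ≡ 0 mod 2} surjects onto GL₂(𝔽₄) via [[A,B],[C,D]] ↦ A mod 2, with kernel HΓ₁(2) = {g ∈ HΓ₀(2) : A ≡ I₂ mod 2}. -/
import Mathlib


open Complex Matrix

/-- A primitive cube root of unity. -/
noncomputable def ω : ℂ := Complex.exp (2 * Real.pi * Complex.I / 3)

/-- `z` is an Eisenstein integer, i.e. `z ∈ ℤ[ω]`. -/
def IsEis (z : ℂ) : Prop := ∃ a b : ℤ, z = (a : ℂ) + (b : ℂ) * ω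

/-- A matrix has Eisenstein integer entries. -/
def EisM {n m : ℕ} (A : Matrix (Fin n) (Fin m) ℂ) : Prop := ∀ i j, IsEis (A i j)

/-- Entrywise congruence mod `2` in `ℤ[ω]`. -/
def MEq2 {n m : ℕ} (A B : Matrix (Fin n) (Fin m) ℂ) : Prop :=
  ∀ i j, ∃ c : ℂ, IsEis c ∧ A i j - B i j = 2 * c

/-- The symplectic-hermitian form `J = [[0,I₂],[-I₂,0]]`. -/
def J4 : Matrix (Fin 4) (Fin 4) ℂ :=
  !![0,0,1,0; 0,0,0,1; -1,0,0,0; 0,-1,0,0]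

/-- The upper-left 2×2 block `A` of `g = [[A,B],[C,D]]`. -/
def Ablk (g : Matrix (Fin 4) (Fin 4) ℂ) : Matrix (Fin 2) (Fin 2) ℂ :=
  g.submatrix (Fin.castAdd 2) (Fin.castAdd 2)

/-- The lower-left 2×2 block `C` of `g = [[A,B],[C,D]]`. -/
def Cblk (g : Matrix (Fin 4) (Fin 4) ℂ) : Matrix (Fin 2) (Fin 2) ℂ :=
  g.submatrix (Fin.natAdd 2) (Fin.castAdd 2)

/-- Membership in `HΓ₀(2)`: Eisenstein entries, `g*Jg = J`, and `C ≡ 0 mod 2`. -/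
def InHG0 (g : Matrix (Fin 4) (Fin 4) ℂ) : Prop :=
  EisM g ∧ gᴴ * J4 * g = J4 ∧ MEq2 (Cblk g) 0

/-- Membership in `HΓ₁(2)`: additionally `A ≡ I₂ mod 2`. -/
def InHG1 (g : Matrix (Fin 4) (Fin 4) ℂ) : Prop :=
  InHG0 g ∧ MEq2 (Ablk g) 1

lemma omega_eq : ω = Complex.exp ((2 * Real.pi / 3 : ℝ) * Complex.I) := by
  unfold ω; push_cast; ring_nf

lemma omega_re : ω.re = -(1/2) := by
  rw [omega_eq, Complex.exp_ofReal_mul_I_re]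
  have : (2 * Real.pi / 3) = Real.pi - Real.pi/3 := by ring
  rw [this, Real.cos_pi_sub, Real.cos_pi_div_three]

lemma omega_im : ω.im = Real.sin (2 * Real.pi / 3) := by
  rw [omega_eq, Complex.exp_ofReal_mul_I_im]

lemma omega_im_pos : 0 < ω.im := by
  rw [omega_im]
  apply Real.sin_pos_of_pos_of_lt_pi
  · positivity
  · nlinarith [Real.pi_pos]

lemma omega_cube : ω ^ 3 = 1 := by
  rw [ω, ← Complex.exp_nat_mul]
  rw [show (3:ℕ) * (2 * Real.pi * Complex.I / 3) = 2 * Real.pi * Complex.I by push_cast; ring]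
  exact Complex.exp_two_pi_mul_I

lemma omega_ne_one : ω ≠ 1 := by
  intro h
  have := omega_im_pos
  rw [h] at this
  simp at this

lemma omega_sq : ω ^ 2 + ω + 1 = 0 := by
  have h : (ω - 1) * (ω ^ 2 + ω + 1) = 0 := by
    have := omega_cube; linear_combination this
  rcases mul_eq_zero.1 h with h | h
  · exact absurd (by linear_combination h : ω = 1) omega_ne_one
  · exact h


lemma omega_mul_omega : ω * ω = -1 - ω := by
  linear_combination omega_sq

lemma omega_conj : (starRingEnd ℂ) ω = -1 - ω := by
  apply Complex.ext
  · simp [Complex.conj_re, Complex.sub_re, Complex.neg_re, omega_re]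
    norm_num [omega_re]
  · simp [Complex.conj_im, Complex.sub_im, Complex.neg_im]



lemma eis_zero : IsEis 0 := ⟨0, 0, by simp⟩
lemma eis_one : IsEis 1 := ⟨1, 0, by simp⟩
lemma eis_omega : IsEis ω := ⟨0, 1, by simp⟩
lemma eis_int (n : ℤ) : IsEis (n : ℂ) := ⟨n, 0, by simp⟩

lemma eis_add {x y : ℂ} (hx : IsEis x) (hy : IsEis y) : IsEis (x + y) := by
  obtain ⟨a, b, rfl⟩ := hx; obtain ⟨c, d, rfl⟩ := hy
  exact ⟨a + c, b + d, by push_cast; ring⟩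

lemma eis_neg {x : ℂ} (hx : IsEis x) : IsEis (-x) := by
  obtain ⟨a, b, rfl⟩ := hx
  exact ⟨-a, -b, by push_cast; ring⟩

lemma eis_sub {x y : ℂ} (hx : IsEis x) (hy : IsEis y) : IsEis (x - y) := by
  rw [sub_eq_add_neg]; exact eis_add hx (eis_neg hy)

lemma eis_mul {x y : ℂ} (hx : IsEis x) (hy : IsEis y) : IsEis (x * y) := by
  obtain ⟨a, b, rfl⟩ := hx; obtain ⟨c, d, rfl⟩ := hy
  refine ⟨a * c - b * d, a * d + b * c - b * d, ?_⟩
  push_cast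
  linear_combination (b : ℂ) * d * omega_mul_omega

lemma eis_conj {x : ℂ} (hx : IsEis x) : IsEis ((starRingEnd ℂ) x) := by
  obtain ⟨a, b, rfl⟩ := hx
  refine ⟨a - b, -b, ?_⟩
  rw [map_add, _root_.map_mul, omega_conj, map_intCast, map_intCast]
  push_cast; ring

lemma eis_sum {ι : Type*} (s : Finset ι) (f : ι → ℂ) (h : ∀ i ∈ s, IsEis (f i)) :
    IsEis (∑ i ∈ s, f i) := by
  classical
  induction s using Finset.induction_on with
  | empty => simpa using eis_zero
  | @insert a s' hnot ih =>
    rw [Finset.sum_insert hnot]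
    exact eis_add (h a (Finset.mem_insert_self a s')) (ih fun i hi => h i (Finset.mem_insert_of_mem hi))

-- linear independence
lemma eis_int_eq_zero {x y : ℤ} (h : (x : ℂ) + (y : ℂ) * ω = 0) : x = 0 ∧ y = 0 := by
  have him : (y : ℝ) * ω.im = 0 := by
    have := congrArg Complex.im h
    simpa [Complex.add_im, Complex.mul_im] using this
  have hy : (y : ℝ) = 0 := by
    rcases mul_eq_zero.1 him with h' | h'
    · exact h'
    · exact absurd h' (ne_of_gt omega_im_pos)
  have hy' : y = 0 := by exact_mod_cast hy
  subst hy'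
  have := congrArg Complex.re h
  simp [Complex.add_re, Complex.mul_re] at this
  exact ⟨by exact_mod_cast this, rfl⟩





def E2 (z : ℂ) : Prop := ∃ c : ℂ, IsEis c ∧ z = 2 * c

lemma E2_zero : E2 0 := ⟨0, eis_zero, by ring⟩
lemma E2_add {x y : ℂ} (hx : E2 x) (hy : E2 y) : E2 (x + y) := by
  obtain ⟨c, hc, rfl⟩ := hx; obtain ⟨d, hd, rfl⟩ := hy
  exact ⟨c + d, eis_add hc hd, by ring⟩
lemma E2_neg {x : ℂ} (hx : E2 x) : E2 (-x) := by
  obtain ⟨c, hc, rfl⟩ := hx; exact ⟨-c, eis_neg hc, by ring⟩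
lemma E2_sub {x y : ℂ} (hx : E2 x) (hy : E2 y) : E2 (x - y) := by
  rw [sub_eq_add_neg]; exact E2_add hx (E2_neg hy)
lemma E2_mul_left {a x : ℂ} (ha : IsEis a) (hx : E2 x) : E2 (a * x) := by
  obtain ⟨c, hc, rfl⟩ := hx; exact ⟨a * c, eis_mul ha hc, by ring⟩
lemma E2_mul_right {a x : ℂ} (ha : IsEis a) (hx : E2 x) : E2 (x * a) := by
  obtain ⟨c, hc, rfl⟩ := hx; exact ⟨c * a, eis_mul hc ha, by ring⟩

lemma not_E2_int_omega {x y : ℤ} (h : E2 ((x:ℂ) + (y:ℂ) * ω)) : 2 ∣ x ∧ 2 ∣ y := by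
  obtain ⟨c, ⟨a, b, rfl⟩, hc⟩ := h
  have h2 : ((x - 2*a : ℤ) : ℂ) + ((y - 2*b : ℤ) : ℂ) * ω = 0 := by
    push_cast; linear_combination hc
  obtain ⟨h1, h2⟩ := eis_int_eq_zero h2
  exact ⟨⟨a, by omega⟩, ⟨b, by omega⟩⟩

lemma not_E2_one : ¬ E2 1 := by
  intro h
  have := (not_E2_int_omega (x := 1) (y := 0) (by simpa using h)).1
  omega

lemma not_E2_omega : ¬ E2 ω := by
  intro h
  have := (not_E2_int_omega (x := 0) (y := 1) (by simpa using h)).2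
  omega

lemma not_E2_one_add_omega : ¬ E2 (1 + ω) := by
  intro h
  have := (not_E2_int_omega (x := 1) (y := 1) (by simpa using h)).1
  omega


lemma E2_congr {x y : ℂ} (e : x = y) (h : E2 x) : E2 y := e ▸ h

lemma residue {z : ℂ} (hz : IsEis z) :
    ∃ r : ℂ, IsEis r ∧ (r = 0 ∨ r = 1 ∨ r = ω ∨ r = 1 + ω) ∧ E2 (z - r) := by
  obtain ⟨a, b, rfl⟩ := hz
  refine ⟨((a % 2 : ℤ) : ℂ) + ((b % 2 : ℤ) : ℂ) * ω, ⟨a % 2, b % 2, rfl⟩, ?_, ?_⟩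
  · rcases Int.emod_two_eq a with h | h <;> rcases Int.emod_two_eq b with h' | h' <;>
      rw [h, h'] <;> push_cast <;> simp
  · refine ⟨((a / 2 : ℤ) : ℂ) + ((b / 2 : ℤ) : ℂ) * ω, ⟨a / 2, b / 2, rfl⟩, ?_⟩
    have ha : ((2 * (a / 2) + a % 2 : ℤ) : ℂ) = (a : ℂ) := by
      exact_mod_cast congrArg (Int.cast : ℤ → ℂ) (Int.mul_ediv_add_emod a 2)
    have hb : ((2 * (b / 2) + b % 2 : ℤ) : ℂ) = (b : ℂ) := by
      exact_mod_cast congrArg (Int.cast : ℤ → ℂ) (Int.mul_ediv_add_emod b 2)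
    push_cast at ha hb
    linear_combination -ha - ω * hb

lemma residue_unit {r : ℂ} (h : r = 1 ∨ r = ω ∨ r = 1 + ω) :
    ∃ rinv : ℂ, IsEis rinv ∧ r * rinv = 1 := by
  rcases h with rfl | rfl | rfl
  · exact ⟨1, eis_one, by ring⟩
  · exact ⟨-1 - ω, ⟨-1, -1, by push_cast; ring⟩, by linear_combination -omega_sq⟩
  · exact ⟨-ω, eis_neg eis_omega, by linear_combination -omega_sq⟩

lemma lift_scalar (a b c d : ℂ) (hb : IsEis b) (hc : IsEis c) (hd : IsEis d)
    (r rinv : ℂ) (hr : IsEis r) (hrinv : IsEis rinv) (hru : r * rinv = 1) (hra : E2 (a - r))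
    (e einv : ℂ) (he : IsEis e) (heinv : IsEis einv) (heu : e * einv = 1)
    (hed : E2 (a * d - b * c - e)) :
    ∃ M M' : Matrix (Fin 2) (Fin 2) ℂ, EisM M ∧ EisM M' ∧ M * M' = 1 ∧ M' * M = 1 ∧
      E2 (M 0 0 - a) ∧ E2 (M 0 1 - b) ∧ E2 (M 1 0 - c) ∧ E2 (M 1 1 - d) := by
  refine ⟨!![r, b; c, (c * b + e) * rinv],
      !![(c * b + e) * rinv * einv, -b * einv; -c * einv, r * einv],
      ?_, ?_, ?_, ?_, ?_, ?_, ?_, ?_⟩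
  · intro i j; fin_cases i <;> fin_cases j <;> simp <;>
      first
      | exact hr | exact hb | exact hc
      | exact eis_mul (eis_add (eis_mul hc hb) he) hrinv
  · intro i j; fin_cases i <;> fin_cases j <;> simp <;>
      first
      | exact eis_mul (eis_mul (eis_add (eis_mul hc hb) he) hrinv) heinv
      | exact eis_neg (eis_mul hb heinv)
      | exact eis_neg (eis_mul hc heinv)
      | exact eis_mul hr heinv
  · ext i j
    rw [Matrix.mul_apply, Fin.sum_univ_two]
    fin_cases i <;> fin_cases j <;> simp <;>
      first
      | linear_combination ((c * b + e) * einv) * hru + heu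
      | ring
  · ext i j
    rw [Matrix.mul_apply, Fin.sum_univ_two]
    fin_cases i <;> fin_cases j <;> simp <;>
      first
      | linear_combination ((c * b + e) * einv) * hru + heu
      | ring
  · have := E2_neg hra; simpa [neg_sub] using this
  · simpa using E2_zero
  · simpa using E2_zero
  · obtain ⟨γ, hγ, hγe⟩ := hed
    obtain ⟨δ, hδ, hδe⟩ := hra
    refine ⟨rinv * (δ * d - γ), eis_mul hrinv (eis_sub (eis_mul hδ hd) hγ), ?_⟩
    show (c * b + e) * rinv - d = 2 * (rinv * (δ * d - γ))
    linear_combination (-rinv) * hγe + (rinv * d) * hδe + d * hru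

lemma mul_one_entries {M M' : Matrix (Fin 2) (Fin 2) ℂ} (h : M * M' = 1) :
    (M 0 0 * M' 0 0 + M 0 1 * M' 1 0 = 1) ∧ (M 0 0 * M' 0 1 + M 0 1 * M' 1 1 = 0) ∧
    (M 1 0 * M' 0 0 + M 1 1 * M' 1 0 = 0) ∧ (M 1 0 * M' 0 1 + M 1 1 * M' 1 1 = 1) := by
  have h00 := congrFun (congrFun h 0) 0
  have h01 := congrFun (congrFun h 0) 1
  have h10 := congrFun (congrFun h 1) 0
  have h11 := congrFun (congrFun h 1) 1
  rw [Matrix.mul_apply, Fin.sum_univ_two] at h00 h01 h10 h11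
  norm_num [Matrix.one_apply] at h00 h01 h10 h11
  exact ⟨h00, h01, h10, h11⟩

lemma lift2 (a b c d : ℂ) (ha : IsEis a) (hb : IsEis b) (hc : IsEis c) (hd : IsEis d)
    (hdet : ¬ E2 (a * d - b * c)) :
    ∃ M M' : Matrix (Fin 2) (Fin 2) ℂ, EisM M ∧ EisM M' ∧ M * M' = 1 ∧ M' * M = 1 ∧
      E2 (M 0 0 - a) ∧ E2 (M 0 1 - b) ∧ E2 (M 1 0 - c) ∧ E2 (M 1 1 - d) := by
  obtain ⟨e, he, he4, hee⟩ := residue (eis_sub (eis_mul ha hd) (eis_mul hb hc))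
  have he4' : e = 1 ∨ e = ω ∨ e = 1 + ω := by
    rcases he4 with rfl | h | h | h
    · exact absurd (by simpa using hee) hdet
    · exact Or.inl h
    · exact Or.inr (Or.inl h)
    · exact Or.inr (Or.inr h)
  obtain ⟨einv, heinv, heu⟩ := residue_unit he4'
  obtain ⟨r, hr, hr4, hra⟩ := residue ha
  rcases hr4 with rfl | hr4'
  · -- a ≡ 0 mod 2; use row operation: top-left becomes a + c ≡ c
    have haE : E2 a := by simpa using hra
    obtain ⟨t, ht, ht4, htc⟩ := residue hc
    have ht4' : t = 1 ∨ t = ω ∨ t = 1 + ω := by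
      rcases ht4 with rfl | h | h | h
      · -- then c ≡ 0 too, so det ≡ 0, contradiction
        have hcE : E2 c := by simpa using htc
        exact absurd (E2_sub (E2_mul_right hd haE) (E2_mul_left hb hcE)) hdet
      · exact Or.inl h
      · exact Or.inr (Or.inl h)
      · exact Or.inr (Or.inr h)
    obtain ⟨tinv, htinv, htu⟩ := residue_unit ht4'
    have hed' : E2 ((a + c) * d - (b + d) * c - e) := by
      refine E2_congr (x := (a * d - b * c - e)) (by ring) hee
    have hta : E2 (a + c - t) := by
      obtain ⟨γ, hγ, hγe⟩ := htc
      obtain ⟨δ, hδ, hδe⟩ := haE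
      exact ⟨δ + γ, eis_add hδ hγ, by linear_combination hδe + hγe⟩
    obtain ⟨M, M', hM, hM', hMM', hM'M, h00, h01, h10, h11⟩ :=
      lift_scalar (a + c) (b + d) c d (eis_add hb hd) hc hd t tinv ht htinv htu hta
        e einv he heinv heu hed'
    -- N = L⁻¹ M with L = !![1,1;0,1] : N = !![M00 - M10, M01 - M11; M10, M11]
    refine ⟨!![M 0 0 - M 1 0, M 0 1 - M 1 1; M 1 0, M 1 1],
        !![M' 0 0, M' 0 1 + M' 0 0; M' 1 0, M' 1 1 + M' 1 0], ?_, ?_, ?_, ?_, ?_, ?_, ?_, ?_⟩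
    · intro i j; fin_cases i <;> fin_cases j <;> simp <;>
        first
        | exact eis_sub (hM 0 0) (hM 1 0) | exact eis_sub (hM 0 1) (hM 1 1)
        | exact hM 1 0 | exact hM 1 1
    · intro i j; fin_cases i <;> fin_cases j <;> simp <;>
        first
        | exact hM' 0 0 | exact eis_add (hM' 0 1) (hM' 0 0)
        | exact hM' 1 0 | exact eis_add (hM' 1 1) (hM' 1 0)
    · obtain ⟨A00, A01, A10, A11⟩ := mul_one_entries hMM'
      ext i j
      rw [Matrix.mul_apply, Fin.sum_univ_two, Matrix.one_apply]
      fin_cases i <;> fin_cases j <;> simp <;>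
        [linear_combination A00 - A10; linear_combination A01 + A00 - A11 - A10;
         linear_combination A10; linear_combination A11 + A10]
    · obtain ⟨B00, B01, B10, B11⟩ := mul_one_entries hM'M
      ext i j
      rw [Matrix.mul_apply, Fin.sum_univ_two, Matrix.one_apply]
      fin_cases i <;> fin_cases j <;> simp <;>
        [linear_combination B00; linear_combination B01; linear_combination B10;
         linear_combination B11]
    · show E2 (M 0 0 - M 1 0 - a)
      exact E2_congr (by ring) (E2_sub h00 h10)
    · show E2 (M 0 1 - M 1 1 - b)
      exact E2_congr (by ring) (E2_sub h01 h11)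
    · show E2 (M 1 0 - c)
      exact h10
    · show E2 (M 1 1 - d)
      exact h11
  · obtain ⟨rinv, hrinv, hru⟩ := residue_unit hr4'
    exact lift_scalar a b c d hb hc hd r rinv hr hrinv hru hra e einv he heinv heu hee











lemma build_g (M M' : Matrix (Fin 2) (Fin 2) ℂ) (hM : EisM M) (hM' : EisM M')
    (hMM' : M * M' = 1) (hM'M : M' * M = 1) :
    ∃ g : Matrix (Fin 4) (Fin 4) ℂ, InHG0 g ∧ Ablk g = M := by
  classical
  set cj := (starRingEnd ℂ) with hcj
  refine ⟨!![M 0 0, M 0 1, 0, 0;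
             M 1 0, M 1 1, 0, 0;
             0, 0, cj (M' 0 0), cj (M' 1 0);
             0, 0, cj (M' 0 1), cj (M' 1 1)], ⟨?_, ?_, ?_⟩, ?_⟩
  · intro i j
    fin_cases i <;> fin_cases j <;> simp <;>
      first
      | exact hM 0 0 | exact hM 0 1 | exact hM 1 0 | exact hM 1 1
      | exact eis_conj (hM' 0 0) | exact eis_conj (hM' 0 1)
      | exact eis_conj (hM' 1 0) | exact eis_conj (hM' 1 1)
      | exact eis_zero
  · obtain ⟨B00, B01, B10, B11⟩ := mul_one_entries hM'M
    have C00 : cj (M' 0 0) * cj (M 0 0) + cj (M' 0 1) * cj (M 1 0) = 1 := by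
      simpa using congrArg cj B00
    have C01 : cj (M' 0 0) * cj (M 0 1) + cj (M' 0 1) * cj (M 1 1) = 0 := by
      simpa using congrArg cj B01
    have C10 : cj (M' 1 0) * cj (M 0 0) + cj (M' 1 1) * cj (M 1 0) = 0 := by
      simpa using congrArg cj B10
    have C11 : cj (M' 1 0) * cj (M 0 1) + cj (M' 1 1) * cj (M 1 1) = 1 := by
      simpa using congrArg cj B11
    ext i j
    fin_cases i <;> fin_cases j <;>
      simp [Matrix.mul_apply, Fin.sum_univ_four, J4, Matrix.conjTranspose_apply,
        Matrix.vecHead, Matrix.vecTail] <;>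
      first
      | rfl
      | linear_combination C00 | linear_combination C01
      | linear_combination C10 | linear_combination C11
      | linear_combination B00 | linear_combination B01
      | linear_combination B10 | linear_combination B11
      | linear_combination -B00 | linear_combination -B01
      | linear_combination -B10 | linear_combination -B11
      | ring
  · intro i j
    fin_cases i <;> fin_cases j <;> exact ⟨0, eis_zero, by show (0:ℂ) - 0 = 2 * 0; norm_num⟩
  · ext i j
    fin_cases i <;> fin_cases j <;> rfl

lemma part2 (A : Matrix (Fin 2) (Fin 2) ℂ) (hA : EisM A)
    (h : ∃ B : Matrix (Fin 2) (Fin 2) ℂ, EisM B ∧ MEq2 (A * B) 1) :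
    ∃ g : Matrix (Fin 4) (Fin 4) ℂ, InHG0 g ∧ MEq2 (Ablk g) A := by
  obtain ⟨B, hB, hAB⟩ := h
  have hP : ∀ i j, (A * B) i j = A i 0 * B 0 j + A i 1 * B 1 j := by
    intro i j; rw [Matrix.mul_apply, Fin.sum_univ_two]
  have hPeis : ∀ i j, IsEis ((A * B) i j) := fun i j => by
    rw [hP]; exact eis_add (eis_mul (hA i 0) (hB 0 j)) (eis_mul (hA i 1) (hB 1 j))
  have e00 : E2 ((A * B) 0 0 - 1) := hAB 0 0
  have e01 : E2 ((A * B) 0 1 - 0) := hAB 0 1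
  have e10 : E2 ((A * B) 1 0 - 0) := hAB 1 0
  have e11 : E2 ((A * B) 1 1 - 1) := hAB 1 1
  have hdet : ¬ E2 (A 0 0 * A 1 1 - A 0 1 * A 1 0) := by
    intro hE
    have hdp : (A * B) 0 0 * (A * B) 1 1 - (A * B) 0 1 * (A * B) 1 0 =
        (A 0 0 * A 1 1 - A 0 1 * A 1 0) * (B 0 0 * B 1 1 - B 0 1 * B 1 0) := by
      simp only [hP]; ring
    have hdetP : E2 ((A * B) 0 0 * (A * B) 1 1 - (A * B) 0 1 * (A * B) 1 0) := by
      rw [hdp]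
      exact E2_mul_right (eis_sub (eis_mul (hB 0 0) (hB 1 1)) (eis_mul (hB 0 1) (hB 1 0))) hE
    have t1 : E2 ((A * B) 0 0 * ((A * B) 1 1 - 1)) := E2_mul_left (hPeis 0 0) e11
    have t3 : E2 ((A * B) 0 1 * (A * B) 1 0) :=
      E2_mul_right (hPeis 1 0) (E2_congr (sub_zero _) e01)
    have hdetP1 : E2 ((A * B) 0 0 * (A * B) 1 1 - (A * B) 0 1 * (A * B) 1 0 - 1) :=
      E2_congr (by ring) (E2_sub (E2_add t1 e00) t3)
    exact not_E2_one (E2_congr (by ring) (E2_sub hdetP hdetP1))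
  obtain ⟨M, M', hM, hM', hMM', hM'M, h00, h01, h10, h11⟩ :=
    lift2 (A 0 0) (A 0 1) (A 1 0) (A 1 1) (hA 0 0) (hA 0 1) (hA 1 0) (hA 1 1) hdet
  obtain ⟨g, hg0, hgA⟩ := build_g M M' hM hM' hMM' hM'M
  refine ⟨g, hg0, ?_⟩
  intro i j
  rw [hgA]
  fin_cases i <;> fin_cases j <;> [exact h00; exact h01; exact h10; exact h11]

lemma part1 (g h : Matrix (Fin 4) (Fin 4) ℂ) (hg : InHG0 g) (hh : InHG0 h) :
    InHG0 (g * h) ∧ MEq2 (Ablk (g * h)) (Ablk g * Ablk h) := by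
  obtain ⟨hgE, hgU, hgC⟩ := hg
  obtain ⟨hhE, hhU, hhC⟩ := hh
  have hgC' : ∀ (i j : Fin 2), E2 (Cblk g i j) := fun i j => E2_congr (sub_zero _) (hgC i j)
  have hhC' : ∀ (i j : Fin 2), E2 (Cblk h i j) := fun i j => E2_congr (sub_zero _) (hhC i j)
  refine ⟨⟨?_, ?_, ?_⟩, ?_⟩
  · intro i j
    rw [Matrix.mul_apply]
    exact eis_sum _ _ (fun k _ => eis_mul (hgE i k) (hhE k j))
  · calc (g * h)ᴴ * J4 * (g * h) = hᴴ * (gᴴ * J4 * g) * h := by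
          rw [Matrix.conjTranspose_mul]; noncomm_ring
    _ = J4 := by rw [hgU, hhU]
  · intro i j
    have key : E2 ((g * h) (Fin.natAdd 2 i) (Fin.castAdd 2 j)) := by
      rw [Matrix.mul_apply, Fin.sum_univ_four]
      exact E2_add (E2_add (E2_add
        (E2_mul_right (hhE 0 (Fin.castAdd 2 j)) (hgC' i 0))
        (E2_mul_right (hhE 1 (Fin.castAdd 2 j)) (hgC' i 1)))
        (E2_mul_left (hgE (Fin.natAdd 2 i) 2) (hhC' 0 j)))
        (E2_mul_left (hgE (Fin.natAdd 2 i) 3) (hhC' 1 j))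
    exact E2_congr (sub_zero _).symm key
  · intro i j
    have e1 : (Ablk g * Ablk h) i j =
        g (Fin.castAdd 2 i) 0 * h 0 (Fin.castAdd 2 j) +
        g (Fin.castAdd 2 i) 1 * h 1 (Fin.castAdd 2 j) := by
      rw [Matrix.mul_apply, Fin.sum_univ_two]; rfl
    have e2 : Ablk (g * h) i j =
        g (Fin.castAdd 2 i) 0 * h 0 (Fin.castAdd 2 j) +
        g (Fin.castAdd 2 i) 1 * h 1 (Fin.castAdd 2 j) +
        g (Fin.castAdd 2 i) 2 * h 2 (Fin.castAdd 2 j) +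
        g (Fin.castAdd 2 i) 3 * h 3 (Fin.castAdd 2 j) := by
      show (g * h) (Fin.castAdd 2 i) (Fin.castAdd 2 j) = _
      rw [Matrix.mul_apply, Fin.sum_univ_four]
    have key : E2 (g (Fin.castAdd 2 i) 2 * h 2 (Fin.castAdd 2 j) +
        g (Fin.castAdd 2 i) 3 * h 3 (Fin.castAdd 2 j)) :=
      E2_add (E2_mul_left (hgE _ 2) (hhC' 0 j)) (E2_mul_left (hgE _ 3) (hhC' 1 j))
    refine E2_congr ?_ key
    rw [e1, e2]; ring

/-- The map `g ↦ A mod 2` is a homomorphism from `HΓ₀(2)` onto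
`GL₂(ℤ[ω]/2) ≅ GL₂(𝔽₄)`, with kernel `HΓ₁(2)`. -/
theorem stmt18 :
    (∀ g h : Matrix (Fin 4) (Fin 4) ℂ, InHG0 g → InHG0 h →
      InHG0 (g * h) ∧ MEq2 (Ablk (g * h)) (Ablk g * Ablk h)) ∧
    (∀ A : Matrix (Fin 2) (Fin 2) ℂ, EisM A →
      (∃ B : Matrix (Fin 2) (Fin 2) ℂ, EisM B ∧ MEq2 (A * B) 1) →
      ∃ g : Matrix (Fin 4) (Fin 4) ℂ, InHG0 g ∧ MEq2 (Ablk g) A) ∧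
    (∀ g : Matrix (Fin 4) (Fin 4) ℂ, InHG0 g → (MEq2 (Ablk g) 1 ↔ InHG1 g)) :=
  ⟨part1, part2, fun g hg => ⟨fun h1 => ⟨hg, h1⟩, fun h1 => h1.2⟩⟩
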